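/- Let x be the unique real number in (0,1) such that 2·arcsin-amplitude trisection holds, i.e., x = sin Φ where F(Φ,k) = K(k)/3. Then x satisfies the quartic equation k²x⁴ − 2k²x³ + 2x − 1 = 0. Concretely: if k ∈ (0,1) and Φ ∈ (0, π/2) satisfy 3·∫₀^Φ dφ/√(1 − k² sin²φ) = ∫₀^{π/2} dψ/√(1 − k² sin²ψ), then x = sin Φ satisfies k²x⁴ − 2k²x³ + 2x − 1 = 0. -/

import Mathlib

open Real Set

noncomputable def ef (k φ : ℝ) : ℝ := 1 / Real.sqrt (1 - k^2 * Real.sin φ ^ 2)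
noncomputable def eF (k x : ℝ) : ℝ := ∫ t in (0:ℝ)..x, ef k t

lemma inner_pos {k : ℝ} (hk0 : 0 < k) (hk1 : k < 1) (φ : ℝ) : 0 < 1 - k^2 * Real.sin φ ^ 2 := by
  nlinarith [Real.sin_sq_le_one φ, sq_nonneg (Real.sin φ), sq_nonneg k]

lemma ef_pos {k : ℝ} (hk0 : 0 < k) (hk1 : k < 1) (φ : ℝ) : 0 < ef k φ := by
  have := inner_pos hk0 hk1 φ
  unfold ef; positivity

lemma ef_cont {k : ℝ} (hk0 : 0 < k) (hk1 : k < 1) : Continuous (ef k) := by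
  unfold ef
  apply Continuous.div continuous_const
  · exact (continuous_const.sub (continuous_const.mul ((Real.continuous_sin).pow 2))).sqrt
  · intro x
    exact ne_of_gt (Real.sqrt_pos.2 (inner_pos hk0 hk1 x))

lemma eF_hasDerivAt {k : ℝ} (hk0 : 0 < k) (hk1 : k < 1) (x : ℝ) :
    HasDerivAt (eF k) (ef k x) x := by
  apply intervalIntegral.integral_hasDerivAt_right
  · exact (ef_cont hk0 hk1).intervalIntegrable _ _
  · exact (ef_cont hk0 hk1).aestronglyMeasurable.stronglyMeasurableAtFilter
  · exact (ef_cont hk0 hk1).continuousAt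

lemma eF_strictMono {k : ℝ} (hk0 : 0 < k) (hk1 : k < 1) : StrictMono (eF k) := by
  apply strictMono_of_deriv_pos
  intro x
  rw [(eF_hasDerivAt hk0 hk1 x).deriv]
  exact ef_pos hk0 hk1 x

lemma eF_zero (k : ℝ) : eF k 0 = 0 := by simp [eF]

noncomputable def Ψf (k a : ℝ) : ℝ := Real.arcsin (Real.cos a / Real.sqrt (1 - k^2 * Real.sin a ^ 2))

lemma psi_hasDerivAt {k a : ℝ} (hk0 : 0 < k) (hk1 : k < 1) (ha : a ∈ Ioo 0 (π/2)) :
    HasDerivAt (Ψf k) (-(Real.sqrt (1 - k^2) / (1 - k^2 * Real.sin a ^ 2))) a := by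
  obtain ⟨ha0, ha2⟩ := ha
  have hs : 0 < Real.sin a := Real.sin_pos_of_pos_of_lt_pi ha0 (by linarith [pi_pos])
  have hc : 0 < Real.cos a := Real.cos_pos_of_mem_Ioo ⟨by linarith [pi_pos], ha2⟩
  have hpy : Real.sin a ^ 2 + Real.cos a ^ 2 = 1 := Real.sin_sq_add_cos_sq a
  have hin : 0 < 1 - k^2 * Real.sin a ^ 2 := by nlinarith [Real.sin_sq_le_one a]
  set s := Real.sin a with hs_def
  set c := Real.cos a with hc_def
  set Δ := Real.sqrt (1 - k^2 * s ^ 2) with hΔ_def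
  have hΔ : 0 < Δ := Real.sqrt_pos.2 hin
  have hΔ2 : Δ^2 = 1 - k^2 * s^2 := Real.sq_sqrt hin.le
  set e := Real.sqrt (1 - k^2) with he_def
  have he : 0 < e := Real.sqrt_pos.2 (by nlinarith)
  have he2 : e^2 = 1 - k^2 := Real.sq_sqrt (by nlinarith)
  -- derivative of inner function
  have h1 : HasDerivAt (fun x => 1 - k^2 * Real.sin x ^ 2)
      (-(k^2 * (2 * s * c))) a := by
    have := ((Real.hasDerivAt_sin a).pow 2).const_mul (k^2)
    have h := this.const_sub 1
    exact h.congr_deriv (by norm_num; left; rfl)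
  have h2 : HasDerivAt (fun x => Real.sqrt (1 - k^2 * Real.sin x ^ 2))
      (-(k^2 * (2 * s * c)) / (2 * Δ)) a := h1.sqrt (ne_of_gt hin)
  have h3 : HasDerivAt (fun x => Real.cos x / Real.sqrt (1 - k^2 * Real.sin x ^ 2))
      ((-s * Δ - c * (-(k^2 * (2 * s * c)) / (2 * Δ))) / Δ^2) a :=
    (Real.hasDerivAt_cos a).div h2 (ne_of_gt hΔ)
  -- bounds on the arcsin argument
  have hargpos : 0 < c / Δ := div_pos hc hΔ
  have harglt : c / Δ < 1 := by
    rw [div_lt_one hΔ]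
    have hk2 : k^2 < 1 := by nlinarith
    have hc2 : c^2 < Δ^2 := by nlinarith [mul_pos hs hs]
    exact lt_of_pow_lt_pow_left₀ 2 hΔ.le hc2
  have h4 := (Real.hasDerivAt_arcsin (by linarith : c/Δ ≠ -1) (ne_of_lt harglt)).comp a h3
  refine h4.congr_deriv (Eq.symm ?_)
  have hsq : Real.sqrt (1 - (c/Δ)^2) = e * s / Δ := by
    rw [show 1 - (c/Δ)^2 = (e * s / Δ)^2 by
      field_simp
      linear_combination hΔ2 - hpy - s^2*he2]
    exact Real.sqrt_sq (by positivity)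
  rw [hsq]
  field_simp
  linear_combination (k^2*(1-s^2)*(1 - 2*s*Δ) + 2*k^2*s*c^2*Δ) * hΔ2 + (-Δ^2) * he2 + (k^2*(1-k^2*s^2)*(2*s*Δ - 1) - 2*k^2*s*Δ^3) * hpy

lemma psi_cont {k : ℝ} (hk0 : 0 < k) (hk1 : k < 1) : Continuous (Ψf k) := by
  apply Real.continuous_arcsin.comp
  apply Continuous.div Real.continuous_cos
  · exact (continuous_const.sub (continuous_const.mul ((Real.continuous_sin).pow 2))).sqrt
  · intro x
    exact ne_of_gt (Real.sqrt_pos.2 (inner_pos hk0 hk1 x))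

lemma cos_le_sqrt {k a : ℝ} (hk0 : 0 < k) (hk1 : k < 1) :
    Real.cos a ≤ Real.sqrt (1 - k^2 * Real.sin a ^ 2) := by
  have hin := inner_pos hk0 hk1 a
  have hΔ : 0 < Real.sqrt (1 - k^2 * Real.sin a ^ 2) := Real.sqrt_pos.2 hin
  have hks : k^2 * Real.sin a ^ 2 ≤ Real.sin a ^ 2 :=
    mul_le_of_le_one_left (sq_nonneg _) (by nlinarith)
  have h1 : Real.cos a ^ 2 ≤ 1 - k^2 * Real.sin a ^ 2 := by
    nlinarith [Real.sin_sq_add_cos_sq a]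
  rcases le_or_gt (Real.cos a) 0 with h | h
  · exact h.trans hΔ.le
  · rw [show Real.cos a = Real.sqrt (Real.cos a ^ 2) from (Real.sqrt_sq h.le).symm]
    exact Real.sqrt_le_sqrt h1

lemma sin_psi {k a : ℝ} (hk0 : 0 < k) (hk1 : k < 1) (hc : 0 ≤ Real.cos a) :
    Real.sin (Ψf k a) = Real.cos a / Real.sqrt (1 - k^2 * Real.sin a ^ 2) := by
  have hin := inner_pos hk0 hk1 a
  have hΔ : 0 < Real.sqrt (1 - k^2 * Real.sin a ^ 2) := Real.sqrt_pos.2 hin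
  apply Real.sin_arcsin
  · have : 0 ≤ Real.cos a / Real.sqrt (1 - k^2 * Real.sin a ^ 2) := by positivity
    linarith
  · rw [div_le_one hΔ]
    exact cos_le_sqrt hk0 hk1

lemma eF_cont {k : ℝ} (hk0 : 0 < k) (hk1 : k < 1) : Continuous (eF k) := by
  have : Differentiable ℝ (eF k) := fun x => (eF_hasDerivAt hk0 hk1 x).differentiableAt
  exact this.continuous

lemma ef_psi {k a : ℝ} (hk0 : 0 < k) (hk1 : k < 1) (hc : 0 ≤ Real.cos a) :
    ef k (Ψf k a) = Real.sqrt (1 - k^2 * Real.sin a ^ 2) / Real.sqrt (1 - k^2) := by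
  have hin := inner_pos hk0 hk1 a
  have hΔ : 0 < Real.sqrt (1 - k^2 * Real.sin a ^ 2) := Real.sqrt_pos.2 hin
  have hΔ2 : Real.sqrt (1 - k^2 * Real.sin a ^ 2) ^ 2 = 1 - k^2 * Real.sin a ^ 2 :=
    Real.sq_sqrt hin.le
  have hk2 : (0:ℝ) < 1 - k^2 := by nlinarith
  have he : 0 < Real.sqrt (1 - k^2) := Real.sqrt_pos.2 hk2
  have he2 : Real.sqrt (1 - k^2) ^ 2 = 1 - k^2 := Real.sq_sqrt hk2.le
  have hpy := Real.sin_sq_add_cos_sq a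
  unfold ef
  rw [sin_psi hk0 hk1 hc]
  rw [show 1 - k^2 * (Real.cos a / Real.sqrt (1 - k^2 * Real.sin a ^ 2)) ^ 2
      = (Real.sqrt (1 - k^2) / Real.sqrt (1 - k^2 * Real.sin a ^ 2)) ^ 2 by
    rw [div_pow, div_pow, he2, hΔ2]
    field_simp
    linear_combination (-(k^2)) * hpy]
  rw [Real.sqrt_sq (by positivity)]
  rw [one_div_div]

lemma identityA {k : ℝ} (hk0 : 0 < k) (hk1 : k < 1) {a : ℝ} (ha : a ∈ Set.Ioc 0 (π/2)) :
    eF k a + eF k (Ψf k a) = eF k (π/2) := by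
  obtain ⟨ha0, ha2⟩ := ha
  have hGc : ContinuousOn (fun x => eF k x + eF k (Ψf k x)) (Set.Icc a (π/2)) :=
    ((eF_cont hk0 hk1).add ((eF_cont hk0 hk1).comp (psi_cont hk0 hk1))).continuousOn
  have key : ∀ x ∈ Set.Ico a (π/2),
      HasDerivWithinAt (fun x => eF k x + eF k (Ψf k x)) 0 (Set.Ici x) x := by
    intro x hx
    have hx0 : 0 < x := lt_of_lt_of_le ha0 hx.1
    have hx2 : x < π/2 := hx.2
    have hin := inner_pos hk0 hk1 x
    have hΔ : 0 < Real.sqrt (1 - k^2 * Real.sin x ^ 2) := Real.sqrt_pos.2 hin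
    have hk2 : (0:ℝ) < 1 - k^2 := by nlinarith
    have he : 0 < Real.sqrt (1 - k^2) := Real.sqrt_pos.2 hk2
    have he2 : Real.sqrt (1 - k^2) ^ 2 = 1 - k^2 := Real.sq_sqrt hk2.le
    have hΔ2 : Real.sqrt (1 - k^2 * Real.sin x ^ 2) ^ 2 = 1 - k^2 * Real.sin x ^ 2 :=
      Real.sq_sqrt hin.le
    have hcx : 0 ≤ Real.cos x := (Real.cos_pos_of_mem_Ioo ⟨by linarith [pi_pos], hx2⟩).le
    have hd := psi_hasDerivAt hk0 hk1 ⟨hx0, hx2⟩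
    have h5 : HasDerivAt (fun y => eF k (Ψf k y))
        (ef k (Ψf k x) * (-(Real.sqrt (1 - k^2) / (1 - k^2 * Real.sin x ^ 2)))) x :=
      (eF_hasDerivAt hk0 hk1 (Ψf k x)).comp x hd
    have sum := (eF_hasDerivAt hk0 hk1 x).add h5
    have hval : ef k x + ef k (Ψf k x) * (-(Real.sqrt (1 - k^2) / (1 - k^2 * Real.sin x ^ 2))) = 0 := by
      rw [ef_psi hk0 hk1 hcx]
      unfold ef
      field_simp
      linear_combination (-1) * hΔ2
    rw [← hval]
    exact sum.hasDerivWithinAt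
  have hconst := constant_of_has_deriv_right_zero hGc key (π/2) ⟨ha2, le_refl _⟩
  have hpsitop : Ψf k (π/2) = 0 := by
    unfold Ψf
    rw [Real.cos_pi_div_two, zero_div, Real.arcsin_zero]
  rw [hpsitop, eF_zero] at hconst
  linarith [hconst]

noncomputable def Df (k a : ℝ) : ℝ :=
  Real.arcsin (2 * Real.sin a * Real.cos a * Real.sqrt (1 - k^2 * Real.sin a ^ 2)
    / (1 - k^2 * Real.sin a ^ 4))

lemma P_pos {k : ℝ} (hk0 : 0 < k) (hk1 : k < 1) (a : ℝ) : 0 < 1 - k^2 * Real.sin a ^ 4 := by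
  have h1 : Real.sin a ^ 4 ≤ 1 := by nlinarith [Real.sin_sq_le_one a, sq_nonneg (Real.sin a)]
  nlinarith [mul_le_of_le_one_right (sq_nonneg k) h1]

lemma r_pos {k : ℝ} (hk0 : 0 < k) (hk1 : k < 1) (a : ℝ) :
    0 < 1 - 2*k^2*Real.sin a^2 + k^2*Real.sin a^4 := by
  have h1 : (0:ℝ) ≤ k^2 * (1 - Real.sin a^2)^2 := by positivity
  nlinarith [Real.sin_sq_le_one a]

lemma D_cont {k : ℝ} (hk0 : 0 < k) (hk1 : k < 1) : Continuous (Df k) := by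
  apply Real.continuous_arcsin.comp
  apply Continuous.div
  · exact ((continuous_const.mul Real.continuous_sin).mul Real.continuous_cos).mul
      ((continuous_const.sub (continuous_const.mul ((Real.continuous_sin).pow 2))).sqrt)
  · exact continuous_const.sub (continuous_const.mul ((Real.continuous_sin).pow 4))
  · intro x
    exact ne_of_gt (P_pos hk0 hk1 x)

lemma D_hasDerivAt {k a : ℝ} (hk0 : 0 < k) (hk1 : k < 1)
    (hq : 0 < 1 - 2*Real.sin a^2 + k^2*Real.sin a^4) :
    HasDerivAt (Df k) (2 * (1 - 2*k^2*Real.sin a^2 + k^2*Real.sin a^4)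
      / ((1 - k^2*Real.sin a^4) * Real.sqrt (1 - k^2*Real.sin a^2))) a := by
  have hin := inner_pos hk0 hk1 a
  have hP := P_pos hk0 hk1 a
  have hr := r_pos hk0 hk1 a
  have hpy := Real.sin_sq_add_cos_sq a
  set s := Real.sin a with hs_def
  set c := Real.cos a with hc_def
  set d := Real.sqrt (1 - k^2 * s ^ 2) with hd_def
  have hd : 0 < d := Real.sqrt_pos.2 hin
  have hd2 : d^2 = 1 - k^2 * s^2 := Real.sq_sqrt hin.le
  -- derivative of numerator
  have hsc : HasDerivAt (fun x => 2 * Real.sin x * Real.cos x)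
      (2 * c * c + 2 * s * (-s)) a := by
    have := ((Real.hasDerivAt_sin a).const_mul 2).mul (Real.hasDerivAt_cos a)
    exact this.congr_deriv (by simp only [hs_def, hc_def])
  have hin' : HasDerivAt (fun x => 1 - k^2 * Real.sin x ^ 2) (-(k^2 * (2 * s * c))) a := by
    have := ((Real.hasDerivAt_sin a).pow 2).const_mul (k^2)
    have h := this.const_sub 1
    exact h.congr_deriv (by norm_num; left; rfl)
  have h2 : HasDerivAt (fun x => Real.sqrt (1 - k^2 * Real.sin x ^ 2))
      (-(k^2 * (2 * s * c)) / (2 * d)) a := hin'.sqrt (ne_of_gt hin)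
  have hnum : HasDerivAt (fun x => (2 * Real.sin x * Real.cos x) * Real.sqrt (1 - k^2 * Real.sin x ^ 2))
      ((2 * c * c + 2 * s * (-s)) * d + (2 * s * c) * (-(k^2 * (2 * s * c)) / (2 * d))) a :=
    hsc.mul h2
  have hden : HasDerivAt (fun x => 1 - k^2 * Real.sin x ^ 4) (-(k^2 * (4 * s^3 * c))) a := by
    have := ((Real.hasDerivAt_sin a).pow 4).const_mul (k^2)
    have h := this.const_sub 1
    exact h.congr_deriv (by norm_num; left; rfl)
  have hu' : HasDerivAt (fun x => (2 * Real.sin x * Real.cos x) * Real.sqrt (1 - k^2 * Real.sin x ^ 2) / (1 - k^2 * Real.sin x ^ 4))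
      ((((2 * c * c + 2 * s * (-s)) * d + (2 * s * c) * (-(k^2 * (2 * s * c)) / (2 * d))) * (1 - k^2 * s^4)
        - (2 * s * c) * d * (-(k^2 * (4 * s^3 * c)))) / (1 - k^2 * s^4)^2) a :=
    hnum.div hden (ne_of_gt hP)
  -- the identity (2scd)^2 + q^2 = P^2
  have hiden : (2*s*c*d)^2 + (1 - 2*s^2 + k^2*s^4)^2 = (1 - k^2*s^4)^2 := by
    linear_combination (4*s^2*d^2)*hpy + (4*s^2 - 4*s^4)*hd2
  have hu2 : (2*s*c*d / (1 - k^2*s^4))^2 < 1 := by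
    rw [div_pow, div_lt_one (by positivity)]
    nlinarith [sq_nonneg (1 - 2*s^2 + k^2*s^4)]
  have habs : |2*s*c*d / (1 - k^2*s^4)| < 1 := by
    rw [← Real.sqrt_one, ← Real.sqrt_sq_eq_abs]
    exact Real.sqrt_lt_sqrt (sq_nonneg _) (by simpa using hu2)
  have hne1 : 2*s*c*d / (1 - k^2*s^4) ≠ -1 := by
    intro hcon; rw [hcon] at habs; simp at habs
  have hne2 : 2*s*c*d / (1 - k^2*s^4) ≠ 1 := by
    intro hcon; rw [hcon] at habs; simp at habs
  have harc := (Real.hasDerivAt_arcsin hne1 hne2).comp a hu'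
  have hDf : Df k = Real.arcsin ∘ (fun x => (2 * Real.sin x * Real.cos x) * Real.sqrt (1 - k^2 * Real.sin x ^ 2) / (1 - k^2 * Real.sin x ^ 4)) := by
    funext x
    simp only [Function.comp, Df]
  rw [hDf]
  refine harc.congr_deriv (Eq.symm ?_)
  have hsq : Real.sqrt (1 - (2*s*c*d / (1 - k^2*s^4))^2) = (1 - 2*s^2 + k^2*s^4)/(1 - k^2*s^4) := by
    rw [show 1 - (2*s*c*d / (1 - k^2*s^4))^2 = ((1 - 2*s^2 + k^2*s^4)/(1 - k^2*s^4))^2 by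
      field_simp
      linear_combination (-1) * mul_inv_cancel₀ (pow_ne_zero 2 hP.ne') - ((1 - k^2*s^4)^2)⁻¹ * hiden]
    exact Real.sqrt_sq (by positivity)
  rw [hsq]
  field_simp
  linear_combination (-((1 - k^2*s^4)*(c^2 - s^2) + 4*k^2*s^4*c^2)) * hd2 + (-((1 - k^2*s^4)*(1 - 2*k^2*s^2) + 4*k^2*s^4*(1 - k^2*s^2))) * hpy

lemma sin_D {k a : ℝ} (hk0 : 0 < k) (hk1 : k < 1) :
    Real.sin (Df k a) = 2 * Real.sin a * Real.cos a * Real.sqrt (1 - k^2 * Real.sin a ^ 2)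
      / (1 - k^2 * Real.sin a ^ 4) := by
  have hin := inner_pos hk0 hk1 a
  have hP := P_pos hk0 hk1 a
  have hpy := Real.sin_sq_add_cos_sq a
  set s := Real.sin a
  set c := Real.cos a
  set d := Real.sqrt (1 - k^2 * s ^ 2) with hd_def
  have hd2 : d^2 = 1 - k^2 * s^2 := Real.sq_sqrt hin.le
  have hiden : (2*s*c*d)^2 + (1 - 2*s^2 + k^2*s^4)^2 = (1 - k^2*s^4)^2 := by
    linear_combination (4*s^2*d^2)*hpy + (4*s^2 - 4*s^4)*hd2
  have hu2 : (2*s*c*d / (1 - k^2*s^4))^2 ≤ 1 := by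
    rw [div_pow, div_le_one (by positivity)]
    nlinarith [sq_nonneg (1 - 2*s^2 + k^2*s^4)]
  have habs : |2*s*c*d / (1 - k^2*s^4)| ≤ 1 := by
    rw [← Real.sqrt_one, ← Real.sqrt_sq_eq_abs]
    exact Real.sqrt_le_sqrt (by simpa using hu2)
  rcases abs_le.1 habs with ⟨h1, h2⟩
  exact Real.sin_arcsin h1 h2

lemma ef_D {k a : ℝ} (hk0 : 0 < k) (hk1 : k < 1) :
    ef k (Df k a) = (1 - k^2 * Real.sin a ^ 4) / (1 - 2*k^2*Real.sin a^2 + k^2*Real.sin a^4) := by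
  have hin := inner_pos hk0 hk1 a
  have hP := P_pos hk0 hk1 a
  have hr := r_pos hk0 hk1 a
  have hpy := Real.sin_sq_add_cos_sq a
  unfold ef
  rw [sin_D hk0 hk1]
  set s := Real.sin a
  set c := Real.cos a
  set d := Real.sqrt (1 - k^2 * s ^ 2) with hd_def
  have hd2 : d^2 = 1 - k^2 * s^2 := Real.sq_sqrt hin.le
  rw [show 1 - k^2 * (2*s*c*d / (1 - k^2*s^4))^2
      = ((1 - 2*k^2*s^2 + k^2*s^4)/(1 - k^2*s^4))^2 by
    field_simp
    linear_combination (-4*s^2*d^2*k^2)*hpy + (-4*k^2*s^2 + 4*k^2*s^4)*hd2]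
  rw [Real.sqrt_sq (by positivity)]
  rw [one_div_div]

lemma qmono {k s S : ℝ} (hk0 : 0 < k) (hk1 : k < 1) (h0 : 0 ≤ s) (h1 : s < S) (hS : S ≤ 1)
    (hq : 1 - 2*S^2 + k^2*S^4 = 0) : 0 < 1 - 2*s^2 + k^2*s^4 := by
  have hs2 : s^2 < S^2 := by nlinarith
  have hk2 : k^2 < 1 := by nlinarith
  have hkss : k^2 * (S^2 + s^2) < 2 := by nlinarith [sq_nonneg s, sq_nonneg S, sq_nonneg k]
  have key : 0 < (S^2 - s^2) * (2 - k^2*(S^2 + s^2)) := by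
    apply mul_pos (by linarith) (by linarith)
  nlinarith [key]

lemma identityB {k Φ : ℝ} (hk0 : 0 < k) (hk1 : k < 1) (hΦ0 : 0 ≤ Φ)
    (hq : ∀ x ∈ Set.Icc 0 Φ, 0 < 1 - 2*Real.sin x^2 + k^2*Real.sin x^4) :
    eF k (Df k Φ) = 2 * eF k Φ := by
  have hcont : ContinuousOn (fun x => eF k (Df k x) - 2 * eF k x) (Set.Icc 0 Φ) :=
    (((eF_cont hk0 hk1).comp (D_cont hk0 hk1)).sub (continuous_const.mul (eF_cont hk0 hk1))).continuousOn
  have key : ∀ x ∈ Set.Ico 0 Φ,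
      HasDerivWithinAt (fun x => eF k (Df k x) - 2 * eF k x) 0 (Set.Ici x) x := by
    intro x hx
    have hqx := hq x ⟨hx.1, hx.2.le⟩
    have hin := inner_pos hk0 hk1 x
    have hP := P_pos hk0 hk1 x
    have hr := r_pos hk0 hk1 x
    have hd : 0 < Real.sqrt (1 - k^2 * Real.sin x ^ 2) := Real.sqrt_pos.2 hin
    have h1 : HasDerivAt (fun y => eF k (Df k y))
        (ef k (Df k x) * (2 * (1 - 2*k^2*Real.sin x^2 + k^2*Real.sin x^4)
          / ((1 - k^2*Real.sin x^4) * Real.sqrt (1 - k^2*Real.sin x^2)))) x :=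
      (eF_hasDerivAt hk0 hk1 (Df k x)).comp x (D_hasDerivAt hk0 hk1 hqx)
    have h2 : HasDerivAt (fun y => 2 * eF k y) (2 * ef k x) x :=
      (eF_hasDerivAt hk0 hk1 x).const_mul 2
    have hsum := h1.sub h2
    have hval : ef k (Df k x) * (2 * (1 - 2*k^2*Real.sin x^2 + k^2*Real.sin x^4)
          / ((1 - k^2*Real.sin x^4) * Real.sqrt (1 - k^2*Real.sin x^2))) - 2 * ef k x = 0 := by
      rw [ef_D hk0 hk1]
      unfold ef
      field_simp
      linear_combination (2:ℝ) * mul_inv_cancel₀ (by linarith [hr] : (0:ℝ) < 1 - k^2*Real.sin x^2*2 + k^2*Real.sin x^4).ne'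
    rw [← hval]
    exact hsum.hasDerivWithinAt
  have hconst := constant_of_has_deriv_right_zero hcont key Φ ⟨hΦ0, le_refl _⟩
  have hD0 : Df k 0 = 0 := by simp [Df]
  rw [hD0, eF_zero] at hconst
  simp only [eF_zero, mul_zero, sub_zero] at hconst
  linarith [hconst]

theorem legendre_trisection_quartic (k Φ : ℝ) (hk : k ∈ Set.Ioo (0:ℝ) 1)
    (hΦ : Φ ∈ Set.Ioo (0:ℝ) (π/2))
    (h : 3 * ∫ φ in (0:ℝ)..Φ, 1 / Real.sqrt (1 - k^2 * Real.sin φ ^ 2)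
       = ∫ ψ in (0:ℝ)..(π/2), 1 / Real.sqrt (1 - k^2 * Real.sin ψ ^ 2)) :
    k^2 * Real.sin Φ ^ 4 - 2 * k^2 * Real.sin Φ ^ 3 + 2 * Real.sin Φ - 1 = 0 := by
  obtain ⟨hk0, hk1⟩ := hk
  obtain ⟨hΦ1, hΦ2⟩ := hΦ
  have hpi := Real.pi_pos
  have hF : 3 * eF k Φ = eF k (π/2) := h
  have hKpos : 0 < eF k (π/2) := by
    have := eF_strictMono hk0 hk1 (show (0:ℝ) < π/2 by linarith)
    rwa [eF_zero] at this
  have hiv : (0:ℝ) ∈ Set.Ioo ((fun s : ℝ => 1 - 2*s^2 + k^2*s^4) 1)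
      ((fun s : ℝ => 1 - 2*s^2 + k^2*s^4) 0) := by
    constructor
    · simp only
      nlinarith
    · simp only
      norm_num
  have hqc : Continuous (fun s : ℝ => 1 - 2*s^2 + k^2*s^4) := by continuity
  obtain ⟨S, hS, hSval⟩ := intermediate_value_Ioo' (by norm_num : (0:ℝ) ≤ 1)
    hqc.continuousOn hiv
  have hSval' : 1 - 2*S^2 + k^2*S^4 = 0 := hSval
  have hS1 : 0 < S := hS.1
  have hS2 : S < 1 := hS.2
  have ha1 : 0 < 1 - k*S := by nlinarith
  have ha2 : 0 < 1 + k*S := by positivity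
  have hkS2 : k^2*S^2 < 1 := by nlinarith [mul_pos ha1 ha2]
  have hsinφs : Real.sin (Real.arcsin S) = S := Real.sin_arcsin (by linarith) hS.2.le
  have hφs1 : 0 < Real.arcsin S := Real.arcsin_pos.2 hS.1
  have hφs2 : Real.arcsin S < π/2 := Real.arcsin_lt_pi_div_two.2 hS.2
  have hdS : 0 < Real.sqrt (1 - k^2*S^2) := Real.sqrt_pos.2 (by nlinarith)
  have hdS2 : Real.sqrt (1 - k^2*S^2) ^ 2 = 1 - k^2*S^2 := Real.sq_sqrt (by nlinarith)
  have harg : Real.cos (Real.arcsin S) / Real.sqrt (1 - k^2 * Real.sin (Real.arcsin S) ^ 2) = S := by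
    rw [hsinφs, Real.cos_arcsin]
    rw [show 1 - S^2 = (S * Real.sqrt (1 - k^2*S^2))^2 by
      rw [mul_pow, hdS2]; linear_combination hSval']
    rw [Real.sqrt_sq (mul_nonneg hS1.le (Real.sqrt_nonneg _))]
    field_simp
    exact div_self (Real.sqrt_pos.2 (by linarith)).ne'
  have hΨφs : Ψf k (Real.arcsin S) = Real.arcsin S := by
    rw [Ψf, harg]
  have hAφs := identityA hk0 hk1 (a := Real.arcsin S) ⟨hφs1, hφs2.le⟩
  rw [hΨφs] at hAφs
  have hΦφs : Φ < Real.arcsin S := by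
    apply (eF_strictMono hk0 hk1).lt_iff_lt.1
    linarith
  have hsinΦS : Real.sin Φ < S := by
    rw [← hsinφs]
    exact Real.strictMonoOn_sin ⟨by linarith, by linarith⟩ ⟨by linarith, by linarith⟩ hΦφs
  have hqOn : ∀ x ∈ Set.Icc (0:ℝ) Φ, 0 < 1 - 2*Real.sin x^2 + k^2*Real.sin x^4 := by
    intro x hx
    have hsx0 : 0 ≤ Real.sin x := Real.sin_nonneg_of_nonneg_of_le_pi hx.1 (by linarith [hx.2])
    have hsx : Real.sin x ≤ Real.sin Φ := by
      rcases eq_or_lt_of_le hx.2 with rfl | hlt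
      · exact le_refl _
      · exact (Real.strictMonoOn_sin ⟨by linarith [hx.1], by linarith [hx.2]⟩
          ⟨by linarith, by linarith⟩ hlt).le
    exact qmono hk0 hk1 hsx0 (lt_of_le_of_lt hsx hsinΦS) hS.2.le hSval'
  have hB := identityB hk0 hk1 hΦ1.le hqOn
  have hA := identityA hk0 hk1 (a := Φ) ⟨hΦ1, hΦ2.le⟩
  have heq : eF k (Df k Φ) = eF k (Ψf k Φ) := by linarith
  have hDΨ : Df k Φ = Ψf k Φ := (eF_strictMono hk0 hk1).injective heq
  have hcΦ : 0 < Real.cos Φ := Real.cos_pos_of_mem_Ioo ⟨by linarith, hΦ2⟩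
  have hsin := congrArg Real.sin hDΨ
  rw [sin_D hk0 hk1, sin_psi hk0 hk1 hcΦ.le] at hsin
  have hin := inner_pos hk0 hk1 Φ
  have hP := P_pos hk0 hk1 Φ
  have hd : 0 < Real.sqrt (1 - k^2 * Real.sin Φ ^ 2) := Real.sqrt_pos.2 hin
  have hd2 : Real.sqrt (1 - k^2 * Real.sin Φ ^ 2) ^ 2 = 1 - k^2 * Real.sin Φ ^ 2 :=
    Real.sq_sqrt hin.le
  field_simp at hsin
  have h2 : Real.cos Φ * (2*Real.sin Φ*(1 - k^2*Real.sin Φ^2)) = Real.cos Φ * (1 - k^2*Real.sin Φ^4) := by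
    rw [div_eq_div_iff (by linarith [hP] : (0:ℝ) < 1 - Real.sin Φ ^ 4 * k ^ 2).ne'
      (Real.sqrt_pos.2 (by linarith [hin] : (0:ℝ) < 1 - Real.sin Φ ^ 2 * k ^ 2)).ne'] at hsin
    linear_combination (Real.cos Φ) * hsin - (2*Real.sin Φ*Real.cos Φ) * Real.sq_sqrt (by linarith [hin] : (0:ℝ) ≤ 1 - Real.sin Φ ^ 2 * k ^ 2)
  have h3 := mul_left_cancel₀ (ne_of_gt hcΦ) h2
  linear_combination h3
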